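/- arXiv:2603.02714 — 2 statements merged into one kernel-verified Lean document; each statement's English description precedes it below -/
import Mathlib

section
/- Let Z ∼ N(0,1), S₁(λ) = E[(|Z| − λ)₊], S₂(λ) = E[(|Z| − λ)₊²]. Then for all λ ≥ 1: (1/2)·φ(λ)/λ² ≤ S₁(λ) ≤ 2·φ(λ)/λ² and (2/5)·φ(λ)/λ³ ≤ S₂(λ) ≤ 4·φ(λ)/λ³, where φ is the standard Gaussian density. -/
open MeasureTheory ProbabilityTheory Set
open scoped ENNReal NNReal Real

noncomputable section

/-- The standard Gaussian density `φ(x) = (2π)^{-1/2} e^{-x²/2}`. -/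
def gaussPhi (x : ℝ) : ℝ := (Real.sqrt (2 * Real.pi))⁻¹ * Real.exp (-x ^ 2 / 2)

namespace Statement16Aux

open Real Filter Topology
open scoped Topology

lemma gaussPhi_pos (x : ℝ) : 0 < gaussPhi x := by
  unfold gaussPhi
  have h : 0 < Real.sqrt (2 * Real.pi) := Real.sqrt_pos.2 (by positivity)
  positivity

lemma gaussPhi_hasDeriv (x : ℝ) : HasDerivAt gaussPhi (-x * gaussPhi x) x := by
  have h : HasDerivAt (fun y : ℝ => -y ^ 2 / 2) (-x) x := by
    have := ((hasDerivAt_pow 2 x).neg).div_const 2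
    convert this using 1
    · rfl
    · rfl
    · rfl
    push_cast
    ring
  have h2 := h.exp
  have h3 := h2.const_mul (Real.sqrt (2 * Real.pi))⁻¹
  convert h3 using 1
  · rfl
  · rfl
  · rfl
  unfold gaussPhi
  ring

lemma gaussPhi_integrable : Integrable gaussPhi := by
  have h : Integrable (fun x : ℝ => Real.exp (-(1/2 : ℝ) * x ^ 2)) :=
    integrable_exp_neg_mul_sq (by norm_num)
  have h2 := h.const_mul ((Real.sqrt (2 * Real.pi))⁻¹)
  have heq : gaussPhi = fun x : ℝ =>
      (Real.sqrt (2 * Real.pi))⁻¹ * Real.exp (-(1/2 : ℝ) * x ^ 2) := by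
    funext x
    unfold gaussPhi
    congr 1
    ring
  rw [heq]
  exact h2

lemma gaussPhi_tendsto : Tendsto gaussPhi atTop (𝓝 0) := by
  have h1 : Tendsto (fun x : ℝ => -x ^ 2 / 2) atTop atBot := by
    apply Filter.Tendsto.atBot_div_const (by norm_num : (0:ℝ) < 2)
    exact tendsto_neg_atBot_iff.mpr (tendsto_pow_atTop (by norm_num))
  have h2 : Tendsto (fun x : ℝ => Real.exp (-x ^ 2 / 2)) atTop (𝓝 0) :=
    Real.tendsto_exp_atBot.comp h1
  have h3 := h2.const_mul (Real.sqrt (2 * Real.pi))⁻¹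
  rw [mul_zero] at h3
  exact h3

lemma x_mul_gaussPhi_tendsto : Tendsto (fun x : ℝ => x * gaussPhi x) atTop (𝓝 0) := by
  have hlin : Tendsto (fun x : ℝ => -(1/2 : ℝ) * x) atTop atBot :=
    (tendsto_id (α := ℝ)).const_mul_atTop_of_neg (by norm_num : (-(1/2 : ℝ)) < 0)
  have hexp : Tendsto (fun x : ℝ => Real.exp (-(1/2 : ℝ) * x)) atTop (𝓝 0) :=
    Real.tendsto_exp_atBot.comp hlin
  have h := (rpow_mul_exp_neg_mul_sq_isLittleO_exp_neg (by norm_num : (0:ℝ) < 1/2)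
      1).isBigO.trans_tendsto hexp
  have h' : Tendsto (fun x : ℝ => x * Real.exp (-(1/2 : ℝ) * x ^ 2)) atTop (𝓝 0) := by
    refine h.congr' ?_
    filter_upwards [eventually_ge_atTop (0:ℝ)] with x hx
    rw [Real.rpow_one]
  have h2 := h'.const_mul (Real.sqrt (2 * Real.pi))⁻¹
  rw [mul_zero] at h2
  refine h2.congr' ?_
  filter_upwards with x
  unfold gaussPhi
  rw [show -(1/2 : ℝ) * x ^ 2 = -x ^ 2 / 2 by ring]
  ring

lemma integral_xphi {a : ℝ} (ha : 0 ≤ a) :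
    ∫ x in Ioi a, x * gaussPhi x = gaussPhi a := by
  have hderiv : ∀ x ∈ Ici a, HasDerivAt (fun y => -gaussPhi y) (x * gaussPhi x) x := by
    intro x _
    have := (gaussPhi_hasDeriv x).neg
    simp only [neg_mul, neg_neg] at this
    exact this
  have hpos : ∀ x ∈ Ioi a, 0 ≤ x * gaussPhi x := fun x hx =>
    mul_nonneg (le_trans ha hx.le) (gaussPhi_pos x).le
  have htend : Tendsto (fun y => -gaussPhi y) atTop (𝓝 0) := by
    simpa using gaussPhi_tendsto.neg
  have := integral_Ioi_of_hasDerivAt_of_nonneg' hderiv hpos htend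
  simpa using this

lemma integrableOn_xphi {a : ℝ} (ha : 0 ≤ a) :
    IntegrableOn (fun x => x * gaussPhi x) (Ioi a) := by
  have hderiv : ∀ x ∈ Ici a, HasDerivAt (fun y => -gaussPhi y) (x * gaussPhi x) x := by
    intro x _
    have := (gaussPhi_hasDeriv x).neg
    simp only [neg_mul, neg_neg] at this
    exact this
  have hpos : ∀ x ∈ Ioi a, 0 ≤ x * gaussPhi x := fun x hx =>
    mul_nonneg (le_trans ha hx.le) (gaussPhi_pos x).le
  have htend : Tendsto (fun y => -gaussPhi y) atTop (𝓝 0) := by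
    simpa using gaussPhi_tendsto.neg
  exact integrableOn_Ioi_deriv_of_nonneg' hderiv hpos htend

lemma sqphi_deriv (x : ℝ) : HasDerivAt (fun y => -(y * gaussPhi y))
    ((x ^ 2 - 1) * gaussPhi x) x := by
  have h := ((hasDerivAt_id x).mul (gaussPhi_hasDeriv x)).neg
  convert h using 1
  · rfl
  · rfl
  · rfl
  simp only [id_eq]
  ring

lemma sqphi_tendsto : Tendsto (fun y : ℝ => -(y * gaussPhi y)) atTop (𝓝 0) := by
  simpa using x_mul_gaussPhi_tendsto.neg

lemma integral_sqphi {a : ℝ} (ha : 1 ≤ a) :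
    ∫ x in Ioi a, (x ^ 2 - 1) * gaussPhi x = a * gaussPhi a := by
  have hpos : ∀ x ∈ Ioi a, 0 ≤ (x ^ 2 - 1) * gaussPhi x := by
    intro x hx
    have hx1 : 1 ≤ x := le_trans ha hx.le
    have : (0:ℝ) ≤ x ^ 2 - 1 := by nlinarith
    exact mul_nonneg this (gaussPhi_pos x).le
  have := integral_Ioi_of_hasDerivAt_of_nonneg' (fun x _ => sqphi_deriv x) hpos sqphi_tendsto
  simpa using this

lemma integrableOn_sqphi {a : ℝ} (ha : 1 ≤ a) :
    IntegrableOn (fun x => (x ^ 2 - 1) * gaussPhi x) (Ioi a) := by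
  have hpos : ∀ x ∈ Ioi a, 0 ≤ (x ^ 2 - 1) * gaussPhi x := by
    intro x hx
    have hx1 : 1 ≤ x := le_trans ha hx.le
    have : (0:ℝ) ≤ x ^ 2 - 1 := by nlinarith
    exact mul_nonneg this (gaussPhi_pos x).le
  exact integrableOn_Ioi_deriv_of_nonneg' (fun x _ => sqphi_deriv x) hpos sqphi_tendsto

/-! ### Mills' ratio bounds -/

lemma millsUB_deriv {x : ℝ} (hx : 0 < x) :
    HasDerivAt (fun y => -(gaussPhi y * ((y ^ 2 + 2) / (y ^ 3 + 3 * y))))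
      (gaussPhi x * (1 + 6 / (x ^ 3 + 3 * x) ^ 2)) x := by
  have hden : x ^ 3 + 3 * x ≠ 0 := by positivity
  have hnum : HasDerivAt (fun y : ℝ => y ^ 2 + 2) (2 * x) x := by
    simpa using (hasDerivAt_pow 2 x).add_const 2
  have hden' : HasDerivAt (fun y : ℝ => y ^ 3 + 3 * y) (3 * x ^ 2 + 3) x := by
    have := (hasDerivAt_pow 3 x).add ((hasDerivAt_id x).const_mul 3)
    convert this using 1
    · rfl
    · rfl
    · funext y
      simp only [Pi.add_apply, id]
    · norm_num
  have hr := hnum.div hden' hden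
  have h := ((gaussPhi_hasDeriv x).mul hr).neg
  convert h using 1
  · rfl
  · rfl
  · rfl
  have hφ : gaussPhi x ≠ 0 := (gaussPhi_pos x).ne'
  simp only [Pi.div_apply]
  field_simp
  ring

lemma millsLB_denom_pos (x : ℝ) : (0:ℝ) < x ^ 4 + 6 * x ^ 2 + 3 := by positivity

lemma millsLB_deriv (x : ℝ) :
    HasDerivAt (fun y => -(gaussPhi y * ((y ^ 3 + 5 * y) / (y ^ 4 + 6 * y ^ 2 + 3))))
      (gaussPhi x * (1 - 24 / (x ^ 4 + 6 * x ^ 2 + 3) ^ 2)) x := by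
  have hden : x ^ 4 + 6 * x ^ 2 + 3 ≠ 0 := (millsLB_denom_pos x).ne'
  have hnum : HasDerivAt (fun y : ℝ => y ^ 3 + 5 * y) (3 * x ^ 2 + 5) x := by
    have := (hasDerivAt_pow 3 x).add ((hasDerivAt_id x).const_mul 5)
    convert this using 1
    · rfl
    · rfl
    · funext y
      simp only [Pi.add_apply, id]
    · norm_num
  have hden' : HasDerivAt (fun y : ℝ => y ^ 4 + 6 * y ^ 2 + 3)
      (4 * x ^ 3 + 12 * x) x := by
    have := ((hasDerivAt_pow 4 x).add ((hasDerivAt_pow 2 x).const_mul 6)).add_const 3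
    convert this using 1
    · rfl
    · rfl
    · rfl
    ring
  have hr := hnum.div hden' hden
  have h := ((gaussPhi_hasDeriv x).mul hr).neg
  convert h using 1
  · rfl
  · rfl
  · rfl
  simp only [Pi.div_apply]
  field_simp
  ring

lemma millsUB_tendsto :
    Tendsto (fun y : ℝ => -(gaussPhi y * ((y ^ 2 + 2) / (y ^ 3 + 3 * y)))) atTop (𝓝 0) := by
  have h : Tendsto (fun y : ℝ => gaussPhi y * ((y ^ 2 + 2) / (y ^ 3 + 3 * y))) atTop (𝓝 0) := by
    apply squeeze_zero'
    · filter_upwards [eventually_ge_atTop (1:ℝ)] with x hx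
      have hd : (0:ℝ) < x ^ 3 + 3 * x := by positivity
      have : (0:ℝ) ≤ (x ^ 2 + 2) / (x ^ 3 + 3 * x) := by positivity
      exact mul_nonneg (gaussPhi_pos x).le this
    · filter_upwards [eventually_ge_atTop (1:ℝ)] with x hx
      have hd : (0:ℝ) < x ^ 3 + 3 * x := by positivity
      have hr : (x ^ 2 + 2) / (x ^ 3 + 3 * x) ≤ 3 := by
        rw [div_le_iff₀ hd]
        nlinarith
      calc gaussPhi x * ((x ^ 2 + 2) / (x ^ 3 + 3 * x)) ≤ gaussPhi x * 3 :=
            mul_le_mul_of_nonneg_left hr (gaussPhi_pos x).le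
        _ = 3 * gaussPhi x := by ring
    · simpa using gaussPhi_tendsto.const_mul (3:ℝ)
  simpa using h.neg

lemma millsLB_tendsto :
    Tendsto (fun y : ℝ => -(gaussPhi y * ((y ^ 3 + 5 * y) / (y ^ 4 + 6 * y ^ 2 + 3))))
      atTop (𝓝 0) := by
  have h : Tendsto (fun y : ℝ => gaussPhi y * ((y ^ 3 + 5 * y) / (y ^ 4 + 6 * y ^ 2 + 3)))
      atTop (𝓝 0) := by
    apply squeeze_zero'
    · filter_upwards [eventually_ge_atTop (1:ℝ)] with x hx
      have : (0:ℝ) ≤ (x ^ 3 + 5 * x) / (x ^ 4 + 6 * x ^ 2 + 3) := by positivity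
      exact mul_nonneg (gaussPhi_pos x).le this
    · filter_upwards [eventually_ge_atTop (1:ℝ)] with x hx
      have hd := millsLB_denom_pos x
      have hr : (x ^ 3 + 5 * x) / (x ^ 4 + 6 * x ^ 2 + 3) ≤ 1 := by
        rw [div_le_one hd]
        nlinarith
      calc gaussPhi x * ((x ^ 3 + 5 * x) / (x ^ 4 + 6 * x ^ 2 + 3)) ≤ gaussPhi x * 1 :=
            mul_le_mul_of_nonneg_left hr (gaussPhi_pos x).le
        _ = 1 * gaussPhi x := by ring
    · simpa using gaussPhi_tendsto.const_mul (1:ℝ)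
  simpa using h.neg

lemma millsUB {a : ℝ} (ha : 1 ≤ a) :
    (∫ x in Ioi a, gaussPhi x) ≤ gaussPhi a * ((a ^ 2 + 2) / (a ^ 3 + 3 * a)) := by
  have ha0 : (0:ℝ) < a := lt_of_lt_of_le one_pos ha
  have hderiv : ∀ x ∈ Ici a,
      HasDerivAt (fun y => -(gaussPhi y * ((y ^ 2 + 2) / (y ^ 3 + 3 * y))))
        (gaussPhi x * (1 + 6 / (x ^ 3 + 3 * x) ^ 2)) x :=
    fun x hx => millsUB_deriv (lt_of_lt_of_le ha0 hx)
  have hpos : ∀ x ∈ Ioi a, 0 ≤ gaussPhi x * (1 + 6 / (x ^ 3 + 3 * x) ^ 2) := by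
    intro x hx
    have hx0 : (0:ℝ) < x := lt_trans ha0 hx
    have hdd : (0:ℝ) < x ^ 3 + 3 * x := by positivity
    exact mul_nonneg (gaussPhi_pos x).le (by positivity)
  have hInt := integrableOn_Ioi_deriv_of_nonneg' hderiv hpos millsUB_tendsto
  have hEq := integral_Ioi_of_hasDerivAt_of_nonneg' hderiv hpos millsUB_tendsto
  have hmono : (∫ x in Ioi a, gaussPhi x) ≤
      ∫ x in Ioi a, gaussPhi x * (1 + 6 / (x ^ 3 + 3 * x) ^ 2) := by
    refine setIntegral_mono_on gaussPhi_integrable.integrableOn hInt measurableSet_Ioi ?_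
    intro x hx
    have hx0 : (0:ℝ) < x := lt_trans ha0 hx
    have hd : (0:ℝ) < x ^ 3 + 3 * x := by positivity
    have h1 : (1:ℝ) ≤ 1 + 6 / (x ^ 3 + 3 * x) ^ 2 := by
      have : (0:ℝ) ≤ 6 / (x ^ 3 + 3 * x) ^ 2 := by positivity
      linarith
    exact le_mul_of_one_le_right (gaussPhi_pos x).le h1
  rw [hEq] at hmono
  calc (∫ x in Ioi a, gaussPhi x) ≤
      0 - -(gaussPhi a * ((a ^ 2 + 2) / (a ^ 3 + 3 * a))) := hmono
    _ = gaussPhi a * ((a ^ 2 + 2) / (a ^ 3 + 3 * a)) := by ring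

lemma millsLB {a : ℝ} (ha : 1 ≤ a) :
    gaussPhi a * ((a ^ 3 + 5 * a) / (a ^ 4 + 6 * a ^ 2 + 3)) ≤ ∫ x in Ioi a, gaussPhi x := by
  have hpos : ∀ x ∈ Ioi a, 0 ≤ gaussPhi x * (1 - 24 / (x ^ 4 + 6 * x ^ 2 + 3) ^ 2) := by
    intro x hx
    have hx1 : 1 ≤ x := le_trans ha hx.le
    have hd := millsLB_denom_pos x
    have hx2 : (1:ℝ) ≤ x ^ 2 := by nlinarith
    have hx4 : (1:ℝ) ≤ x ^ 4 := by nlinarith [sq_nonneg (x ^ 2 - 1)]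
    have hD : (10:ℝ) ≤ x ^ 4 + 6 * x ^ 2 + 3 := by linarith
    have h24 : 24 / (x ^ 4 + 6 * x ^ 2 + 3) ^ 2 ≤ 1 := by
      rw [div_le_one (by positivity)]
      nlinarith
    have : (0:ℝ) ≤ 1 - 24 / (x ^ 4 + 6 * x ^ 2 + 3) ^ 2 := by linarith
    exact mul_nonneg (gaussPhi_pos x).le this
  have hInt := integrableOn_Ioi_deriv_of_nonneg' (fun x _ => millsLB_deriv x) hpos
    millsLB_tendsto
  have hEq := integral_Ioi_of_hasDerivAt_of_nonneg' (fun x _ => millsLB_deriv x) hpos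
    millsLB_tendsto
  have hmono : (∫ x in Ioi a, gaussPhi x * (1 - 24 / (x ^ 4 + 6 * x ^ 2 + 3) ^ 2)) ≤
      ∫ x in Ioi a, gaussPhi x := by
    refine setIntegral_mono_on hInt gaussPhi_integrable.integrableOn measurableSet_Ioi ?_
    intro x _
    have hd := millsLB_denom_pos x
    have h1 : 1 - 24 / (x ^ 4 + 6 * x ^ 2 + 3) ^ 2 ≤ 1 := by
      have : (0:ℝ) ≤ 24 / (x ^ 4 + 6 * x ^ 2 + 3) ^ 2 := by positivity
      linarith
    exact mul_le_of_le_one_right (gaussPhi_pos x).le h1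
  rw [hEq] at hmono
  calc gaussPhi a * ((a ^ 3 + 5 * a) / (a ^ 4 + 6 * a ^ 2 + 3))
      = 0 - -(gaussPhi a * ((a ^ 3 + 5 * a) / (a ^ 4 + 6 * a ^ 2 + 3))) := by ring
    _ ≤ ∫ x in Ioi a, gaussPhi x := hmono

/-! ### Reduction of the Gaussian expectation to an integral on `Ioi lam` -/

lemma gauss_expect (lam : ℝ) (hlam : 1 ≤ lam) (k : ℕ) (hk : k ≠ 0) :
    (∫ z, (max (|z| - lam) 0) ^ k ∂(gaussianReal 0 1))
      = 2 * ∫ x in Ioi lam, (x - lam) ^ k * gaussPhi x := by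
  have hlam0 : (0:ℝ) < lam := lt_of_lt_of_le one_pos hlam
  rw [gaussianReal_of_var_ne_zero _ one_ne_zero]
  have hd : (gaussianPDF 0 1) = fun x =>
      ((Real.toNNReal (gaussianPDFReal 0 1 x) : ℝ≥0) : ℝ≥0∞) := by
    funext x; rfl
  rw [hd, integral_withDensity_eq_integral_smul
    (f := fun x => Real.toNNReal (gaussianPDFReal 0 1 x))
    (measurable_real_toNNReal.comp (measurable_gaussianPDFReal 0 1))]
  have hpdf : ∀ x : ℝ, gaussianPDFReal 0 1 x = gaussPhi x := by
    intro x
    simp only [gaussianPDFReal, gaussPhi, NNReal.coe_one, mul_one, sub_zero]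
  have step1 : (∫ x, (Real.toNNReal (gaussianPDFReal 0 1 x)) • (max (|x| - lam) 0) ^ k)
      = ∫ x : ℝ, (fun t => (max (t - lam) 0) ^ k * gaussPhi t) |x| := by
    congr 1
    funext x
    have hnn : 0 ≤ gaussianPDFReal 0 1 x := gaussianPDFReal_nonneg 0 1 x
    have habs : gaussPhi |x| = gaussPhi x := by
      unfold gaussPhi
      rw [sq_abs]
    show _ = (max (|x| - lam) 0) ^ k * gaussPhi |x|
    rw [habs, NNReal.smul_def, Real.coe_toNNReal _ hnn, hpdf x, smul_eq_mul]
    ring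
  have step2 : (∫ x : ℝ, (fun t => (max (t - lam) 0) ^ k * gaussPhi t) |x|)
      = 2 * ∫ x in Ioi (0:ℝ), (max (x - lam) 0) ^ k * gaussPhi x :=
    integral_comp_abs (f := fun t => (max (t - lam) 0) ^ k * gaussPhi t)
  rw [step1, step2]
  congr 1
  rw [setIntegral_eq_of_subset_of_forall_diff_eq_zero measurableSet_Ioi
    (Ioi_subset_Ioi hlam0.le) ?_]
  · refine setIntegral_congr_fun measurableSet_Ioi fun x hx => ?_
    rw [max_eq_left (sub_nonneg.mpr (le_of_lt hx))]
  · intro x hx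
    have hxle : x ≤ lam := by
      rcases hx with ⟨_, h2⟩
      simpa using h2
    rw [max_eq_right (sub_nonpos.mpr hxle), zero_pow hk, zero_mul]

end Statement16Aux

open Statement16Aux

/-- For `Z ∼ N(0,1)`, `S₁(λ) = E[(|Z|−λ)₊]`, `S₂(λ) = E[(|Z|−λ)₊²]`,
and all `λ ≥ 1`: `(1/2)φ(λ)/λ² ≤ S₁(λ) ≤ 2φ(λ)/λ²` and
`(2/5)φ(λ)/λ³ ≤ S₂(λ) ≤ 4φ(λ)/λ³`. -/
theorem statement16 (lam : ℝ) (hlam : 1 ≤ lam) :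
    ((1 / 2) * (gaussPhi lam / lam ^ 2) ≤ ∫ z, max (|z| - lam) 0 ∂(gaussianReal 0 1) ∧
      (∫ z, max (|z| - lam) 0 ∂(gaussianReal 0 1)) ≤ 2 * (gaussPhi lam / lam ^ 2)) ∧
    ((2 / 5) * (gaussPhi lam / lam ^ 3) ≤
        ∫ z, (max (|z| - lam) 0) ^ 2 ∂(gaussianReal 0 1) ∧
      (∫ z, (max (|z| - lam) 0) ^ 2 ∂(gaussianReal 0 1)) ≤
        4 * (gaussPhi lam / lam ^ 3)) := by
  have hlam0 : (0:ℝ) < lam := lt_of_lt_of_le one_pos hlam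
  set p : ℝ := gaussPhi lam with hp_def
  set q : ℝ := ∫ x in Ioi lam, gaussPhi x with hq_def
  have hp : 0 < p := gaussPhi_pos lam
  -- Mills-type bounds, in polynomial form
  have hB : (0:ℝ) < lam ^ 3 + 3 * lam := by positivity
  have hub : q * (lam ^ 3 + 3 * lam) ≤ p * (lam ^ 2 + 2) := by
    have h := millsUB hlam
    rw [← hq_def, ← hp_def, ← mul_div_assoc] at h
    exact (le_div_iff₀ hB).mp h
  have hlb : p * (lam ^ 3 + 5 * lam) ≤ q * (lam ^ 4 + 6 * lam ^ 2 + 3) := by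
    have h := millsLB hlam
    rw [← hq_def, ← hp_def, ← mul_div_assoc] at h
    exact (div_le_iff₀ (millsLB_denom_pos lam)).mp h
  have hq0 : 0 ≤ q := setIntegral_nonneg measurableSet_Ioi fun x _ => (gaussPhi_pos x).le
  -- exact values of the two integrals
  have e1 : ∫ x in Ioi lam, (x - lam) * gaussPhi x = p - lam * q := by
    have : ∀ x : ℝ, (x - lam) * gaussPhi x = x * gaussPhi x - lam * gaussPhi x :=
      fun x => by ring
    simp_rw [this]
    have hA : IntegrableOn (fun x => x * gaussPhi x) (Ioi lam) := integrableOn_xphi hlam0.le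
    have hB : IntegrableOn (fun x => lam * gaussPhi x) (Ioi lam) :=
      gaussPhi_integrable.integrableOn.const_mul lam
    rw [integral_sub hA hB, integral_const_mul, integral_xphi hlam0.le, ← hq_def, ← hp_def]
  have e2 : ∫ x in Ioi lam, (x - lam) ^ 2 * gaussPhi x = (lam ^ 2 + 1) * q - lam * p := by
    have : ∀ x : ℝ, (x - lam) ^ 2 * gaussPhi x =
        ((x ^ 2 - 1) * gaussPhi x - (2 * lam) * (x * gaussPhi x)) +
          (lam ^ 2 + 1) * gaussPhi x := fun x => by ring
    simp_rw [this]
    have hA : IntegrableOn (fun x => (x ^ 2 - 1) * gaussPhi x) (Ioi lam) :=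
      integrableOn_sqphi hlam
    have hB : IntegrableOn (fun x => 2 * lam * (x * gaussPhi x)) (Ioi lam) :=
      (integrableOn_xphi hlam0.le).const_mul (2 * lam)
    have hAB : IntegrableOn (fun x => (x ^ 2 - 1) * gaussPhi x - 2 * lam * (x * gaussPhi x))
        (Ioi lam) := hA.sub hB
    have hC : IntegrableOn (fun x => (lam ^ 2 + 1) * gaussPhi x) (Ioi lam) :=
      gaussPhi_integrable.integrableOn.const_mul (lam ^ 2 + 1)
    rw [integral_add hAB hC, integral_sub hA hB,
      integral_const_mul, integral_const_mul, integral_sqphi hlam, integral_xphi hlam0.le,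
      ← hq_def, ← hp_def]
    ring
  have h1 := gauss_expect lam hlam 1 one_ne_zero
  simp only [pow_one] at h1
  have h2 := gauss_expect lam hlam 2 two_ne_zero
  rw [h1, h2, e1, e2]
  have h3 : (0:ℝ) < lam ^ 3 + 3 * lam := by positivity
  have hD : (0:ℝ) < lam ^ 4 + 6 * lam ^ 2 + 3 := millsLB_denom_pos lam
  constructor
  · constructor
    · -- (1/2) p / λ² ≤ 2(p − λq)
      rw [show (1/2 : ℝ) * (p / lam ^ 2) = (p / 2) / lam ^ 2 by ring,
        div_le_iff₀ (by positivity : (0:ℝ) < lam ^ 2)]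
      nlinarith [mul_le_mul_of_nonneg_left hub (by positivity : (0:ℝ) ≤ 2 * lam ^ 2),
        mul_nonneg (mul_nonneg hp.le hlam0.le) (sq_nonneg (lam - 1)),
        mul_nonneg hq0 hlam0.le]
    · -- 2(p − λq) ≤ 2 p / λ²
      rw [show (2:ℝ) * (p / lam ^ 2) = (2 * p) / lam ^ 2 by ring,
        le_div_iff₀ (by positivity : (0:ℝ) < lam ^ 2)]
      nlinarith [mul_le_mul_of_nonneg_left hlb (by positivity : (0:ℝ) ≤ 2 * lam ^ 3),
        mul_nonneg hq0 hlam0.le, hp.le]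
  · constructor
    · -- (2/5) p / λ³ ≤ 2((λ²+1)q − λp)
      rw [show (2/5 : ℝ) * (p / lam ^ 3) = (2 * p / 5) / lam ^ 3 by ring,
        div_le_iff₀ (by positivity : (0:ℝ) < lam ^ 3)]
      nlinarith [mul_le_mul_of_nonneg_left hlb
          (by positivity : (0:ℝ) ≤ 2 * (lam ^ 2 + 1) * lam ^ 3),
        mul_nonneg hp.le hlam0.le, mul_nonneg (mul_nonneg hp.le hlam0.le) (sq_nonneg lam),
        sq_nonneg (lam ^ 2 - 1), mul_pos hp hlam0]
    · -- 2((λ²+1)q − λp) ≤ 4 p / λ³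
      rw [show (4:ℝ) * (p / lam ^ 3) = (4 * p) / lam ^ 3 by ring,
        le_div_iff₀ (by positivity : (0:ℝ) < lam ^ 3)]
      nlinarith [mul_le_mul_of_nonneg_left hub
          (by positivity : (0:ℝ) ≤ 2 * (lam ^ 2 + 1) * lam ^ 3),
        mul_nonneg hp.le hlam0.le, mul_nonneg hq0 hlam0.le, mul_pos hp hlam0,
        sq_nonneg lam]
end
end

section
/- Let A ⊆ ℝ^d, x ∈ A, and 0 < ε ≤ γ. Let M(S, B) denote the B-packing number of S and M_A^loc(ε) = sup_{δ ≥ ε} sup_{y ∈ A} M(A ∩ (y + 2δB₂), δB₂). Then log M(A ∩ (x + 2γB₂), εB₂) ≤ ⌈log₂(2γ/ε)⌉ · log M_A^loc(ε). -/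
open MeasureTheory Metric Set
open scoped ENNReal NNReal

noncomputable section

/-- `packNum A B` is the `B`-packing number of `A`: the largest cardinality of a finite
subset `A₀ ⊆ A` such that `x − y ∉ B` for all distinct `x, y ∈ A₀`. -/
def packNum {E : Type*} [Sub E] (A B : Set E) : ℕ :=
  sSup {n : ℕ | ∃ s : Finset E, ↑s ⊆ A ∧
    (∀ x ∈ s, ∀ y ∈ s, x ≠ y → x - y ∉ B) ∧ s.card = n}

namespace St18

variable {d : ℕ}

/-- The defining set of the packing number. -/
def pset (S B : Set (EuclideanSpace ℝ (Fin d))) : Set ℕ :=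
  {n : ℕ | ∃ s : Finset (EuclideanSpace ℝ (Fin d)), ↑s ⊆ S ∧
    (∀ x ∈ s, ∀ y ∈ s, x ≠ y → x - y ∉ B) ∧ s.card = n}

lemma packNum_eq (S B : Set (EuclideanSpace ℝ (Fin d))) :
    packNum S B = sSup (pset S B) := rfl

lemma pset_nonempty (S B : Set (EuclideanSpace ℝ (Fin d))) : (pset S B).Nonempty :=
  ⟨0, ∅, by simp, by simp, rfl⟩

lemma core_card_le {δ : ℝ} (hδ : 0 < δ) (t s : Finset (EuclideanSpace ℝ (Fin d)))
    (hcov : ∀ p ∈ s, ∃ c ∈ t, dist p c < δ / 2)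
    (hsep : ∀ p ∈ s, ∀ q ∈ s, p ≠ q → p - q ∉ closedBall (0 : EuclideanSpace ℝ (Fin d)) δ) :
    s.card ≤ t.card := by
  have key : ∀ p : EuclideanSpace ℝ (Fin d), ∃ c, p ∈ s → c ∈ t ∧ dist p c < δ / 2 := by
    intro p
    by_cases hp : p ∈ s
    · obtain ⟨c, hc1, hc2⟩ := hcov p hp
      exact ⟨c, fun _ => ⟨hc1, hc2⟩⟩
    · exact ⟨0, fun h => absurd h hp⟩
  choose f hf using key
  apply Finset.card_le_card_of_injOn f (fun p hp => (hf p hp).1)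
  intro p hp q hq hfpq
  by_contra hne
  apply hsep p hp q hq hne
  rw [mem_closedBall_zero_iff, ← dist_eq_norm]
  have h1 := (hf p hp).2
  have h2 := (hf q hq).2
  have : dist p q ≤ dist p (f p) + dist (f q) q := by
    rw [hfpq]; exact dist_triangle _ _ _
  rw [dist_comm (f q) q] at this
  linarith

/-- Any `δ`-separated finite subset of a fixed closed ball has bounded cardinality. -/
lemma sep_bdd (z : EuclideanSpace ℝ (Fin d)) (R : ℝ) {δ : ℝ} (hδ : 0 < δ) :
    ∃ C : ℕ, ∀ s : Finset (EuclideanSpace ℝ (Fin d)), ↑s ⊆ closedBall z R →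
      (∀ p ∈ s, ∀ q ∈ s, p ≠ q → p - q ∉ closedBall (0 : EuclideanSpace ℝ (Fin d)) δ) →
      s.card ≤ C := by
  obtain ⟨t, htf, htc⟩ := (Metric.totallyBounded_iff.mp
    (isCompact_closedBall z R).totallyBounded) (δ / 2) (by linarith)
  refine ⟨htf.toFinset.card, fun s hs hsep => ?_⟩
  refine core_card_le hδ _ _ (fun p hp => ?_) hsep
  have := htc (hs hp)
  simp only [mem_iUnion, Metric.mem_ball] at this
  obtain ⟨c, hc, hpc⟩ := this
  exact ⟨c, htf.mem_toFinset.mpr hc, hpc⟩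

lemma pset_bddAbove {S : Set (EuclideanSpace ℝ (Fin d))} {z : EuclideanSpace ℝ (Fin d)}
    {R δ : ℝ} (hδ : 0 < δ) (hS : S ⊆ closedBall z R) :
    BddAbove (pset S (closedBall (0 : EuclideanSpace ℝ (Fin d)) δ)) := by
  obtain ⟨C, hC⟩ := sep_bdd z R hδ
  exact ⟨C, fun n ⟨s, h1, h2, h3⟩ => h3 ▸ hC s (fun p hp => hS (h1 hp)) h2⟩

/-- Uniform bound: a `δ`-separated set in a ball of radius `2δ` has cardinality `≤ C`,
uniformly in `δ` and the center. -/
lemma sep_bdd_uniform :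
    ∃ C : ℕ, ∀ (δ : ℝ), 0 < δ → ∀ (y : EuclideanSpace ℝ (Fin d)),
      ∀ s : Finset (EuclideanSpace ℝ (Fin d)), ↑s ⊆ closedBall y (2 * δ) →
      (∀ p ∈ s, ∀ q ∈ s, p ≠ q → p - q ∉ closedBall (0 : EuclideanSpace ℝ (Fin d)) δ) →
      s.card ≤ C := by
  obtain ⟨t, htf, htc⟩ := (Metric.totallyBounded_iff.mp
    (isCompact_closedBall (0 : EuclideanSpace ℝ (Fin d)) 2).totallyBounded) (1/4) (by norm_num)
  classical
  refine ⟨htf.toFinset.card, fun δ hδ y s hs hsep => ?_⟩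
  have hle : (htf.toFinset.image (fun c => y + δ • c)).card ≤ htf.toFinset.card :=
    Finset.card_image_le
  refine le_trans (core_card_le hδ (htf.toFinset.image (fun c => y + δ • c)) s
    (fun p hp => ?_) hsep) hle
  have hpy : dist p y ≤ 2 * δ := (hs hp)
  set q : EuclideanSpace ℝ (Fin d) := δ⁻¹ • (p - y) with hq
  have hqball : q ∈ closedBall (0 : EuclideanSpace ℝ (Fin d)) 2 := by
    rw [mem_closedBall_zero_iff, hq, norm_smul, norm_inv, Real.norm_of_nonneg hδ.le,
      ← dist_eq_norm]
    rw [inv_mul_le_iff₀ hδ]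
    linarith [hpy]
  have := htc hqball
  simp only [mem_iUnion, Metric.mem_ball] at this
  obtain ⟨c, hc, hqc⟩ := this
  refine ⟨y + δ • c, Finset.mem_image_of_mem _ (htf.mem_toFinset.mpr hc), ?_⟩
  have heq : p - (y + δ • c) = δ • (q - c) := by
    rw [hq, smul_sub, smul_inv_smul₀ hδ.ne']
    abel
  rw [dist_eq_norm, heq, norm_smul, Real.norm_of_nonneg hδ.le, ← dist_eq_norm]
  nlinarith [hqc, dist_nonneg (x := q) (y := c)]

end St18

/-- For `A ⊆ ℝ^d`, `x ∈ A` and `0 < ε ≤ γ`, with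
`M_A^loc(ε) = sup_{δ ≥ ε} sup_{y ∈ A} M(A ∩ (y + 2δB₂), δB₂)`,
`log M(A ∩ (x + 2γB₂), εB₂) ≤ ⌈log₂(2γ/ε)⌉ · log M_A^loc(ε)`. -/
theorem statement18 {d : ℕ} (A : Set (EuclideanSpace ℝ (Fin d)))
    (x : EuclideanSpace ℝ (Fin d)) (hx : x ∈ A)
    (ε γ : ℝ) (hε : 0 < ε) (hεγ : ε ≤ γ) :
    Real.log (packNum (A ∩ closedBall x (2 * γ)) (closedBall 0 ε)) ≤
      (⌈Real.logb 2 (2 * γ / ε)⌉₊ : ℝ) *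
        Real.log (⨆ δ : {δ : ℝ // ε ≤ δ}, ⨆ y : A,
          ((packNum (A ∩ closedBall (y : EuclideanSpace ℝ (Fin d)) (2 * δ.1))
            (closedBall 0 δ.1) : ℕ) : ℝ)) := by
  classical
  obtain ⟨C, hC⟩ := St18.sep_bdd_uniform (d := d)
  have hγ : 0 < γ := lt_of_lt_of_le hε hεγ
  set MS : Set ℕ := {n : ℕ | ∃ δ : ℝ, ε ≤ δ ∧ ∃ y ∈ A,
    packNum (A ∩ closedBall y (2 * δ)) (closedBall 0 δ) = n} with hMS
  have hpack_le : ∀ δ : ℝ, ε ≤ δ → ∀ y : EuclideanSpace ℝ (Fin d),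
      packNum (A ∩ closedBall y (2 * δ)) (closedBall 0 δ) ≤ C := by
    intro δ hδ y
    rw [St18.packNum_eq]
    refine csSup_le (St18.pset_nonempty _ _) ?_
    rintro n ⟨s, h1, h2, rfl⟩
    exact hC δ (lt_of_lt_of_le hε hδ) y s (fun p hp => (h1 hp).2) h2
  have hMS_bdd : BddAbove MS := ⟨C, by rintro n ⟨δ, hδ, y, hy, rfl⟩; exact hpack_le δ hδ y⟩
  have hMS_ne : MS.Nonempty := ⟨_, ε, le_refl ε, x, hx, rfl⟩
  set M : ℕ := sSup MS with hM
  have hM_mem : M ∈ MS := Nat.sSup_mem hMS_ne hMS_bdd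
  have hmem_le : ∀ δ : ℝ, ε ≤ δ → ∀ y ∈ A,
      packNum (A ∩ closedBall y (2 * δ)) (closedBall 0 δ) ≤ M := by
    intro δ hδ y hy
    exact le_csSup hMS_bdd ⟨δ, hδ, y, hy, rfl⟩
  -- chaining claim
  have claim : ∀ k : ℕ, ∀ y ∈ A,
      packNum (A ∩ closedBall y (2 ^ (k + 1) * ε)) (closedBall 0 ε) ≤ M ^ (k + 1) := by
    intro k
    induction k with
    | zero =>
      intro y hy
      simp only [zero_add, pow_one]
      exact hmem_le ε le_rfl y hy
    | succ k ih =>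
      intro y hy
      set δ : ℝ := 2 ^ (k + 1) * ε with hδdef
      have h12 : (1:ℝ) ≤ 2 ^ (k+1) := by
        calc (1:ℝ) = 1 ^ (k+1) := (one_pow _).symm
          _ ≤ 2 ^ (k+1) := pow_le_pow_left₀ (by norm_num) (by norm_num) _
      have hδ0 : 0 < δ := by positivity
      have hδε : ε ≤ δ := by rw [hδdef]; nlinarith
      have h2δ : (2:ℝ) ^ (k + 1 + 1) * ε = 2 * δ := by rw [hδdef]; ring
      rw [h2δ]
      set S : Set (EuclideanSpace ℝ (Fin d)) := A ∩ closedBall y (2 * δ) with hSdef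
      have hS_sub : S ⊆ closedBall y (2 * δ) := inter_subset_right
      have hSA : S ⊆ A := inter_subset_left
      have hbddδ : BddAbove (St18.pset S (closedBall 0 δ)) := St18.pset_bddAbove hδ0 hS_sub
      have hTmem : packNum S (closedBall 0 δ) ∈ St18.pset S (closedBall 0 δ) := by
        rw [St18.packNum_eq]; exact Nat.sSup_mem (St18.pset_nonempty _ _) hbddδ
      obtain ⟨T, hT_sub, hT_sep, hT_card⟩ := hTmem
      have hT_le : T.card ≤ M := by
        rw [hT_card]; exact hmem_le δ hδε y hy
      have hcov : ∀ z ∈ S, ∃ t ∈ T, dist z t ≤ δ := by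
        intro z hz
        by_contra hcon
        push_neg at hcon
        have hzT : z ∉ T := by
          intro hzT
          have := hcon z hzT
          simp only [dist_self] at this
          linarith
        have hins : (insert z T).card ∈ St18.pset S (closedBall 0 δ) := by
          refine ⟨insert z T, ?_, ?_, rfl⟩
          · intro p hp
            rcases Finset.mem_insert.mp hp with h | h
            · exact h ▸ hz
            · exact hT_sub h
          · intro p hp q hq hne
            rw [mem_closedBall_zero_iff, ← dist_eq_norm]
            rcases Finset.mem_insert.mp hp with hp' | hp' <;>
              rcases Finset.mem_insert.mp hq with hq' | hq'
            · exact absurd (hp'.trans hq'.symm) hne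
            · subst hp'; exact not_le.mpr (hcon q hq')
            · subst hq'; rw [dist_comm]; exact not_le.mpr (hcon p hp')
            · have h := hT_sep p hp' q hq' hne
              rwa [mem_closedBall_zero_iff, ← dist_eq_norm] at h
        have hle : (insert z T).card ≤ packNum S (closedBall 0 δ) := by
          rw [St18.packNum_eq]; exact le_csSup hbddδ hins
        rw [Finset.card_insert_of_notMem hzT, hT_card] at hle
        omega
      rw [St18.packNum_eq]
      refine csSup_le (St18.pset_nonempty _ _) ?_
      rintro n ⟨s, hs_sub, hs_sep, rfl⟩
      have key : ∀ p : EuclideanSpace ℝ (Fin d), ∃ t, p ∈ s → t ∈ T ∧ dist p t ≤ δ := by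
        intro p
        by_cases hp : p ∈ s
        · obtain ⟨t, ht1, ht2⟩ := hcov p (hs_sub hp)
          exact ⟨t, fun _ => ⟨ht1, ht2⟩⟩
        · exact ⟨0, fun h => absurd h hp⟩
      choose g hg using key
      have hmap : ∀ p ∈ s, g p ∈ T := fun p hp => (hg p hp).1
      rw [Finset.card_eq_sum_card_fiberwise hmap]
      have hfib : ∀ t ∈ T, (s.filter (fun p => g p = t)).card ≤ M ^ (k+1) := by
        intro t htT
        have htA : t ∈ A := hSA (hT_sub htT)
        have hbb : BddAbove (St18.pset (A ∩ closedBall t δ) (closedBall 0 ε)) :=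
          St18.pset_bddAbove hε inter_subset_right
        have hmem : (s.filter (fun p => g p = t)).card ∈
            St18.pset (A ∩ closedBall t δ) (closedBall 0 ε) := by
          refine ⟨_, ?_, ?_, rfl⟩
          · intro p hp
            have hp' := Finset.mem_filter.mp hp
            refine ⟨hSA (hs_sub hp'.1), mem_closedBall.mpr ?_⟩
            have hd := (hg p hp'.1).2
            rw [hp'.2] at hd
            exact hd
          · intro p hp q hq hne
            exact hs_sep p (Finset.mem_filter.mp hp).1 q (Finset.mem_filter.mp hq).1 hne
        calc (s.filter (fun p => g p = t)).card
            ≤ packNum (A ∩ closedBall t δ) (closedBall 0 ε) := by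
              rw [St18.packNum_eq]; exact le_csSup hbb hmem
          _ ≤ M ^ (k+1) := ih t htA
      calc ∑ t ∈ T, (s.filter (fun p => g p = t)).card
          ≤ ∑ _t ∈ T, M ^ (k+1) := Finset.sum_le_sum hfib
        _ = T.card * M ^ (k+1) := by rw [Finset.sum_const, smul_eq_mul]
        _ ≤ M * M ^ (k+1) := Nat.mul_le_mul_right _ hT_le
        _ = M ^ (k+1+1) := by ring
  -- the exponent
  have hK1 : 1 ≤ ⌈Real.logb 2 (2 * γ / ε)⌉₊ := by
    refine Nat.one_le_ceil_iff.mpr ?_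
    apply Real.logb_pos (by norm_num)
    rw [lt_div_iff₀ hε]; linarith
  set K := ⌈Real.logb 2 (2 * γ / ε)⌉₊ with hK
  have h2γ : 2 * γ ≤ 2 ^ K * ε := by
    have h1 : Real.logb 2 (2 * γ / ε) ≤ (K:ℝ) := Nat.le_ceil _
    have hr : (0:ℝ) < 2 * γ / ε := by positivity
    have h2 : (2:ℝ) * γ / ε ≤ 2 ^ (K:ℝ) := by
      calc (2:ℝ) * γ / ε = 2 ^ Real.logb 2 (2 * γ / ε) :=
            (Real.rpow_logb (by norm_num) (by norm_num) hr).symm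
        _ ≤ 2 ^ (K:ℝ) := Real.rpow_le_rpow_of_exponent_le (by norm_num) h1
    rw [Real.rpow_natCast] at h2
    rw [div_le_iff₀ hε] at h2
    linarith
  have hmain : packNum (A ∩ closedBall x (2 * γ)) (closedBall 0 ε) ≤ M ^ K := by
    obtain ⟨k, hk⟩ : ∃ k, K = k + 1 := ⟨K - 1, by omega⟩
    have hbig := claim k x hx
    rw [← hk] at hbig
    rw [St18.packNum_eq]
    refine csSup_le (St18.pset_nonempty _ _) ?_
    rintro n ⟨s, h1, h2, rfl⟩
    have hbb : BddAbove (St18.pset (A ∩ closedBall x (2 ^ K * ε)) (closedBall 0 ε)) :=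
      St18.pset_bddAbove hε inter_subset_right
    have hmem : s.card ∈ St18.pset (A ∩ closedBall x (2 ^ K * ε)) (closedBall 0 ε) :=
      ⟨s, fun p hp => ⟨(h1 hp).1, closedBall_subset_closedBall h2γ (h1 hp).2⟩, h2, rfl⟩
    calc s.card ≤ packNum (A ∩ closedBall x (2 ^ K * ε)) (closedBall 0 ε) := by
          rw [St18.packNum_eq]; exact le_csSup hbb hmem
      _ ≤ M ^ K := hbig
  -- the local quantity
  haveI : Nonempty A := ⟨⟨x, hx⟩⟩
  haveI : Nonempty {δ : ℝ // ε ≤ δ} := ⟨⟨ε, le_rfl⟩⟩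
  set Mloc : ℝ := ⨆ δ : {δ : ℝ // ε ≤ δ}, ⨆ y : A,
      ((packNum (A ∩ closedBall (y : EuclideanSpace ℝ (Fin d)) (2 * δ.1))
        (closedBall 0 δ.1) : ℕ) : ℝ) with hMloc
  have houter_bdd : BddAbove (Set.range (fun δ : {δ : ℝ // ε ≤ δ} => ⨆ y : A,
      ((packNum (A ∩ closedBall (y : EuclideanSpace ℝ (Fin d)) (2 * δ.1))
        (closedBall 0 δ.1) : ℕ) : ℝ))) := by
    refine ⟨(C:ℝ), ?_⟩
    rintro _ ⟨δ, rfl⟩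
    exact ciSup_le fun y => by exact_mod_cast hpack_le δ.1 δ.2 y
  have hMle : (M:ℝ) ≤ Mloc := by
    obtain ⟨δ₀, hδ₀, y₀, hy₀, hMeq⟩ := hM_mem
    have hinner_bdd : BddAbove (Set.range (fun y : A =>
        ((packNum (A ∩ closedBall (y : EuclideanSpace ℝ (Fin d)) (2 * δ₀))
          (closedBall 0 δ₀) : ℕ) : ℝ))) := by
      refine ⟨(C:ℝ), ?_⟩
      rintro _ ⟨y, rfl⟩
      simpa using (Nat.cast_le.mpr (hpack_le δ₀ hδ₀ y) : _ ≤ (C:ℝ))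
    have step1 : ((packNum (A ∩ closedBall y₀ (2 * δ₀)) (closedBall 0 δ₀) : ℕ) : ℝ) ≤
        ⨆ y : A, ((packNum (A ∩ closedBall (y : EuclideanSpace ℝ (Fin d)) (2 * δ₀))
          (closedBall 0 δ₀) : ℕ) : ℝ) := le_ciSup hinner_bdd (⟨y₀, hy₀⟩ : A)
    have step2 : (⨆ y : A, ((packNum (A ∩ closedBall (y : EuclideanSpace ℝ (Fin d)) (2 * δ₀))
          (closedBall 0 δ₀) : ℕ) : ℝ)) ≤ Mloc := by
      rw [hMloc]
      exact le_ciSup houter_bdd (⟨δ₀, hδ₀⟩ : {δ : ℝ // ε ≤ δ})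
    rw [← hMeq]
    exact le_trans step1 step2
  have hM1 : 1 ≤ M := by
    have hb : BddAbove (St18.pset (A ∩ closedBall x (2 * ε)) (closedBall 0 ε)) :=
      St18.pset_bddAbove hε inter_subset_right
    have h1 : 1 ∈ St18.pset (A ∩ closedBall x (2 * ε)) (closedBall 0 ε) := by
      refine ⟨{x}, ?_, ?_, Finset.card_singleton x⟩
      · intro p hp
        simp only [Finset.coe_singleton, Set.mem_singleton_iff] at hp
        subst hp
        exact ⟨hx, mem_closedBall_self (by linarith)⟩
      · intro p hp q hq hne
        simp only [Finset.mem_singleton] at hp hq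
        exact absurd (hp.trans hq.symm) hne
    calc 1 ≤ packNum (A ∩ closedBall x (2 * ε)) (closedBall 0 ε) := by
          rw [St18.packNum_eq]; exact le_csSup hb h1
      _ ≤ M := hmem_le ε le_rfl x hx
  have hMloc1 : (1:ℝ) ≤ Mloc := le_trans (by exact_mod_cast hM1) hMle
  rcases Nat.eq_zero_or_pos (packNum (A ∩ closedBall x (2 * γ)) (closedBall 0 ε)) with hP | hP
  · rw [hP]
    simp only [Nat.cast_zero, Real.log_zero]
    exact mul_nonneg (Nat.cast_nonneg _) (Real.log_nonneg hMloc1)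
  · calc Real.log ((packNum (A ∩ closedBall x (2 * γ)) (closedBall 0 ε) : ℕ) : ℝ)
        ≤ Real.log ((M:ℝ) ^ K) := by
          apply Real.log_le_log (by exact_mod_cast hP)
          exact_mod_cast hmain
      _ = (K:ℝ) * Real.log M := by rw [Real.log_pow]
      _ ≤ (K:ℝ) * Real.log Mloc := by
          apply mul_le_mul_of_nonneg_left _ (Nat.cast_nonneg K)
          exact Real.log_le_log (by exact_mod_cast hM1) hMle
end
end
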